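/- arXiv:1908.09905 — 4 statements merged into one kernel-verified Lean document; each statement's English description precedes it below -/
import Mathlib

section
/- Let k > s ≥ 3 be integers, let N be a positive integer, let S ⊆ {1,…,N} be a k-AP free set, and let d₁,…,d_s ∈ {1,…,2N}. Set S_i = { x + 6(i−1)N − 1 + d_i : x ∈ S } for 1 ≤ i ≤ s, and A = S₁ ∪ ⋯ ∪ S_s. Then the sets S₁,…,S_s are pairwise disjoint, every nontrivial arithmetic progression contained in A of length greater than s is contained in a single S_i, and A is k-AP free with |A| = s·|S|. -/
open Finset Pointwise

/-- The `k`-term arithmetic progression `{x, x+d, …, x+(k-1)d}` as a finite set. -/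
def AP (k : ℕ) (x d : ℤ) : Finset ℤ := (Finset.range k).image (fun i : ℕ => x + (i : ℤ) * d)

/-- A set of integers is `k`-AP free if it contains no nontrivial `k`-term
arithmetic progression. -/
def APFree (k : ℕ) (A : Set ℤ) : Prop :=
  ∀ x d : ℤ, d ≠ 0 → ¬ (↑(AP k x d) : Set ℤ) ⊆ A

/-- `fAP s A` is the number of nontrivial `s`-term arithmetic progressions contained
in the finite set `A`. -/
noncomputable def fAP (s : ℕ) (A : Finset ℤ) : ℕ :=
  Nat.card {P : Finset ℤ // P ⊆ A ∧ ∃ x d : ℤ, d ≠ 0 ∧ P = AP s x d}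

/-- `fsk s k n` is the maximum number of nontrivial `s`-term arithmetic progressions
in a `k`-AP free set of `n` integers. -/
noncomputable def fsk (s k n : ℕ) : ℕ :=
  sSup {m | ∃ A : Finset ℤ, A.card = n ∧ APFree k ↑A ∧ fAP s A = m}

/-- `rk k n` is the size of the largest `k`-AP free subset of `{1, …, n}`. -/
noncomputable def rk (k n : ℕ) : ℕ :=
  sSup {m | ∃ A : Finset ℤ, A ⊆ Finset.Icc 1 (n : ℤ) ∧ APFree k ↑A ∧ A.card = m}

/-- The partial sumset `A +_G B` along the edge set `E` of a bipartite graph. -/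
def partialSumset (E : Finset (ℤ × ℤ)) : Finset ℤ := E.image (fun e => e.1 + e.2)

/-- `pathCount A B E a a'` is the number of (ordered) paths `(a, b, a'', b', a')` of
length four between `a` and `a'` in the bipartite graph with parts `A`, `B` and
edge set `E`. -/
def pathCount (A B : Finset ℤ) (E : Finset (ℤ × ℤ)) (a a' : ℤ) : ℕ :=
  ((B ×ˢ A ×ˢ B).filter (fun t =>
    (a, t.1) ∈ E ∧ (t.2.1, t.1) ∈ E ∧ (t.2.1, t.2.2) ∈ E ∧ (a', t.2.2) ∈ E)).card

lemma mem_AP {L : ℕ} {x d y : ℤ} :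
    y ∈ AP L x d ↔ ∃ j : ℕ, j < L ∧ y = x + (j : ℤ) * d := by
  simp [AP, eq_comm]

theorem block_construction (k s : ℕ) (hs : 3 ≤ s) (hk : s < k) (N : ℕ) (hN : 0 < N)
    (S : Finset ℤ) (hS : S ⊆ Finset.Icc 1 (N : ℤ)) (hSfree : APFree k ↑S)
    (d : Fin s → ℤ) (hd : ∀ i, d i ∈ Finset.Icc (1 : ℤ) (2 * N))
    (Si : Fin s → Finset ℤ)
    (hSi : ∀ i, Si i = S.image (fun x => x + 6 * ((i : ℕ) : ℤ) * N - 1 + d i))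
    (A : Finset ℤ) (hA : A = Finset.univ.biUnion Si) :
    (∀ i j, i ≠ j → Disjoint (Si i) (Si j)) ∧
    (∀ (x dd : ℤ) (L : ℕ), s < L → dd ≠ 0 → (↑(AP L x dd) : Set ℤ) ⊆ ↑A →
      ∃ i, (↑(AP L x dd) : Set ℤ) ⊆ ↑(Si i)) ∧
    APFree k ↑A ∧ A.card = s * S.card := by
  classical
  set c : Fin s → ℤ := fun i => 6 * ((i : ℕ) : ℤ) * N - 1 + d i with hc
  have hSi' : ∀ i, Si i = S.image (fun x => x + c i) := by
    intro i
    rw [hSi i]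
    apply Finset.image_congr
    intro x _
    simp only [hc]
    ring
  have hbound : ∀ i, ∀ y ∈ Si i,
      6 * ((i : ℕ) : ℤ) * N + 1 ≤ y ∧ y ≤ 6 * ((i : ℕ) : ℤ) * N + 3 * N - 1 := by
    intro i y hy
    rw [hSi' i, Finset.mem_image] at hy
    obtain ⟨z, hz, rfl⟩ := hy
    have hz' := Finset.mem_Icc.mp (hS hz)
    have hd' := Finset.mem_Icc.mp (hd i)
    simp only [hc]
    generalize 6 * ((i : ℕ) : ℤ) * N = m
    omega
  have hsep : ∀ i j, i ≠ j → ∀ y ∈ Si i, ∀ z ∈ Si j, 3 * (N : ℤ) + 2 ≤ |y - z| := by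
    intro i j hij y hy z hz
    obtain ⟨hy1, hy2⟩ := hbound i y hy
    obtain ⟨hz1, hz2⟩ := hbound j z hz
    have hNZ : (0 : ℤ) ≤ N := Int.ofNat_nonneg N
    rcases lt_or_gt_of_ne hij with h | h
    · have hij' : ((i : ℕ) : ℤ) + 1 ≤ ((j : ℕ) : ℤ) := by
        exact_mod_cast Nat.succ_le_of_lt (Fin.lt_iff_val_lt_val.mp h)
      have h6 : 6 * ((i : ℕ) : ℤ) * N + 6 * N ≤ 6 * ((j : ℕ) : ℤ) * N := by nlinarith
      rw [abs_of_nonpos (by linarith)]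
      linarith
    · have hij' : ((j : ℕ) : ℤ) + 1 ≤ ((i : ℕ) : ℤ) := by
        exact_mod_cast Nat.succ_le_of_lt (Fin.lt_iff_val_lt_val.mp h)
      have h6 : 6 * ((j : ℕ) : ℤ) * N + 6 * N ≤ 6 * ((i : ℕ) : ℤ) * N := by nlinarith
      rw [abs_of_nonneg (by linarith)]
      linarith
  have hsame : ∀ i, ∀ y ∈ Si i, ∀ z ∈ Si i, |y - z| ≤ 3 * (N : ℤ) - 2 := by
    intro i y hy z hz
    obtain ⟨hy1, hy2⟩ := hbound i y hy
    obtain ⟨hz1, hz2⟩ := hbound i z hz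
    rw [abs_le]
    constructor <;> linarith
  have hNZ : (1 : ℤ) ≤ N := by exact_mod_cast hN
  -- main structural lemma
  have hmain : ∀ (x dd : ℤ) (L : ℕ), s < L → dd ≠ 0 →
      (↑(AP L x dd) : Set ℤ) ⊆ ↑A → ∃ i, (↑(AP L x dd) : Set ℤ) ⊆ ↑(Si i) := by
    intro x dd L hL hdd hsub
    have helt : ∀ j : ℕ, j < L → (x + (j : ℤ) * dd) ∈ A := by
      intro j hj
      have h1 : (x + (j : ℤ) * dd) ∈ AP L x dd := mem_AP.mpr ⟨j, hj, rfl⟩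
      exact Finset.mem_coe.mp (hsub (Finset.mem_coe.mpr h1))
    have hblock : ∀ j : ℕ, j < L → ∃ i, (x + (j : ℤ) * dd) ∈ Si i := by
      intro j hj
      have h1 := helt j hj
      rw [hA, Finset.mem_biUnion] at h1
      obtain ⟨i, _, hi⟩ := h1
      exact ⟨i, hi⟩
    by_cases hsmall : |dd| ≤ 3 * (N : ℤ) + 1
    · obtain ⟨i0, hi0⟩ := hblock 0 (by omega)
      have hall : ∀ j : ℕ, j < L → (x + (j : ℤ) * dd) ∈ Si i0 := by
        intro j
        induction j with
        | zero => intro _; simpa using hi0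
        | succ n ih =>
          intro hn
          have hn' : n < L := by omega
          have h1 := ih hn'
          obtain ⟨i1, hi1⟩ := hblock (n + 1) hn
          by_cases hieq : i1 = i0
          · rwa [hieq] at hi1
          · exfalso
            have h2 := hsep i1 i0 hieq _ hi1 _ h1
            have h3 : (x + ((n + 1 : ℕ) : ℤ) * dd) - (x + (n : ℤ) * dd) = dd := by
              push_cast; ring
            rw [h3] at h2
            linarith
      refine ⟨i0, fun y hy => ?_⟩
      obtain ⟨j, hj, rfl⟩ := mem_AP.mp (Finset.mem_coe.mp hy)
      exact Finset.mem_coe.mpr (hall j hj)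
    · exfalso
      push_neg at hsmall
      have hbig : 3 * (N : ℤ) + 2 ≤ |dd| := hsmall
      choose f hf using fun j : Fin L => hblock j j.2
      have hinj : Function.Injective f := by
        intro j j' hjj'
        by_contra hne
        have hmem1 := hf j
        have hmem2 := hf j'
        rw [hjj'] at hmem1
        have h2 := hsame (f j') _ hmem1 _ hmem2
        have h3 : (x + ((j : ℕ) : ℤ) * dd) - (x + ((j' : ℕ) : ℤ) * dd)
            = (((j : ℕ) : ℤ) - ((j' : ℕ) : ℤ)) * dd := by ring
        rw [h3, abs_mul] at h2
        have hne' : (((j : ℕ) : ℤ) - ((j' : ℕ) : ℤ)) ≠ 0 := by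
          intro h
          apply hne
          have : ((j : ℕ) : ℤ) = ((j' : ℕ) : ℤ) := by linarith
          exact Fin.ext (by exact_mod_cast this)
        have h4 : (1 : ℤ) ≤ |((j : ℕ) : ℤ) - ((j' : ℕ) : ℤ)| := Int.one_le_abs hne'
        have h5 : |dd| ≤ |((j : ℕ) : ℤ) - ((j' : ℕ) : ℤ)| * |dd| :=
          le_mul_of_one_le_left (abs_nonneg dd) h4
        linarith
      have hcard := Fintype.card_le_of_injective f hinj
      simp only [Fintype.card_fin] at hcard
      omega
  refine ⟨?_, hmain, ?_, ?_⟩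
  · intro i j hij
    rw [Finset.disjoint_left]
    intro y hy hz
    have := hsep i j hij y hy y hz
    simp at this
    linarith
  · intro x dd hdd hsub
    obtain ⟨i, hi⟩ := hmain x dd k hk hdd hsub
    apply hSfree (x - c i) dd hdd
    intro y hy
    obtain ⟨j, hj, rfl⟩ := mem_AP.mp (Finset.mem_coe.mp hy)
    have h1 : (x + (j : ℤ) * dd) ∈ Si i := by
      have : (x + (j : ℤ) * dd) ∈ AP k x dd := mem_AP.mpr ⟨j, hj, rfl⟩
      exact Finset.mem_coe.mp (hi (Finset.mem_coe.mpr this))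
    rw [hSi' i, Finset.mem_image] at h1
    obtain ⟨z, hz, hzeq⟩ := h1
    have : x - c i + (j : ℤ) * dd = z := by linarith
    rw [this]
    exact Finset.mem_coe.mpr hz
  · rw [hA, Finset.card_biUnion]
    · have hSicard : ∀ i, (Si i).card = S.card := by
        intro i
        rw [hSi' i]
        exact Finset.card_image_of_injective S (add_left_injective (c i))
      simp only [hSicard]
      simp [Finset.sum_const, Finset.card_univ, mul_comm]
    · intro i _ j _ hij
      rw [show Function.onFun Disjoint Si i j = Disjoint (Si i) (Si j) from rfl, Finset.disjoint_left]
      intro y hy hz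
      have := hsep i j hij y hy y hz
      simp at this
      linarith
end

section
/- Let s ≥ 3 and N ≥ 2 be integers. The number of pairs (a, D) of integers such that a + (i−1)D ∈ {6(i−1)N + N + 1, …, 6(i−1)N + 2N} for every 1 ≤ i ≤ s is at least (1/s)·binom(N, 2). -/
open Finset Pointwise

theorem count_pairs_in_blocks (s N : ℕ) (hs : 3 ≤ s) (hN : 2 ≤ N) :
    (1 / (s : ℝ)) * (N.choose 2 : ℝ) ≤
      (Nat.card {q : ℤ × ℤ // ∀ i : ℕ, 1 ≤ i → i ≤ s →
        6 * ((i : ℤ) - 1) * N + N + 1 ≤ q.1 + ((i : ℤ) - 1) * q.2 ∧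
        q.1 + ((i : ℤ) - 1) * q.2 ≤ 6 * ((i : ℤ) - 1) * N + 2 * N} : ℝ) := by
  set n : ℤ := (N : ℤ) with hn
  have hn2 : (2:ℤ) ≤ n := by rw [hn]; exact_mod_cast hN
  have hs1 : (2:ℤ) ≤ (s:ℤ) - 1 := by
    have : (3:ℤ) ≤ (s:ℤ) := by exact_mod_cast hs
    linarith
  set T : Set (ℤ × ℤ) := {q : ℤ × ℤ | ∀ i : ℕ, 1 ≤ i → i ≤ s →
        6 * ((i : ℤ) - 1) * N + N + 1 ≤ q.1 + ((i : ℤ) - 1) * q.2 ∧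
        q.1 + ((i : ℤ) - 1) * q.2 ≤ 6 * ((i : ℤ) - 1) * N + 2 * N} with hT
  -- the explicit family of good pairs
  set S : Finset (ℤ × ℤ) := (Finset.range N).biUnion
      (fun j => {(2*n - j : ℤ)} ×ˢ Finset.Icc (6*n) (6*n + (j:ℤ)/((s:ℤ)-1))) with hS
  -- T is finite
  have hTsub : T ⊆ ↑((Finset.Icc (n+1) (2*n)) ×ˢ (Finset.Icc (5*n+1) (7*n))) := by
    intro q hq
    have h1 := hq 1 le_rfl (by omega)
    have h2 := hq 2 (by omega) (by omega)
    norm_num at h1 h2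
    simp only [Finset.coe_product, Set.mem_prod, Finset.mem_coe, Finset.mem_Icc]
    constructor
    · constructor <;> linarith [h1.1, h1.2]
    · constructor <;> linarith [h1.1, h1.2, h2.1, h2.2]
  have hTfin : T.Finite :=
    Set.Finite.subset (Finset.finite_toSet _) hTsub
  -- S ⊆ T
  have hST : (↑S : Set (ℤ × ℤ)) ⊆ T := by
    intro q hq
    simp only [hS, Finset.coe_biUnion, Set.mem_iUnion, Finset.mem_coe, Finset.mem_range,
      Finset.mem_product, Finset.mem_singleton, Finset.mem_Icc] at hq
    obtain ⟨j, hjN, hq1, hq2⟩ := hq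
    set t : ℤ := (j:ℤ)/((s:ℤ)-1) with hdef
    have ht0 : 0 ≤ t := Int.ediv_nonneg (by positivity) (by linarith)
    have hst : ((s:ℤ)-1) * t ≤ (j:ℤ) := by
      have h := Int.mul_ediv_add_emod (j:ℤ) ((s:ℤ)-1)
      have h2 := Int.emod_nonneg (j:ℤ) (b := (s:ℤ)-1) (by linarith)
      linarith
    intro i hi1 his
    set e : ℤ := (i:ℤ) - 1 with he
    have he0 : 0 ≤ e := by
      have : (1:ℤ) ≤ (i:ℤ) := by exact_mod_cast hi1
      linarith
    have hes : e ≤ (s:ℤ) - 1 := by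
      have : (i:ℤ) ≤ (s:ℤ) := by exact_mod_cast his
      linarith
    have hjn : (j:ℤ) ≤ n - 1 := by
      have : (j:ℤ) < n := by rw [hn]; exact_mod_cast hjN
      linarith
    have hj0 : (0:ℤ) ≤ (j:ℤ) := by positivity
    have hD1 : e * (6*n) ≤ e * q.2 := mul_le_mul_of_nonneg_left hq2.1 he0
    have hD2 : e * q.2 ≤ e * (6*n + t) := mul_le_mul_of_nonneg_left hq2.2 he0
    have het : e * t ≤ ((s:ℤ)-1) * t := mul_le_mul_of_nonneg_right hes ht0
    constructor
    · rw [hq1]; nlinarith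
    · rw [hq1]; nlinarith
  -- cardinality of S
  have hcardS : S.card = ∑ j ∈ Finset.range N, (j / (s-1) + 1) := by
    rw [hS, Finset.card_biUnion]
    · apply Finset.sum_congr rfl
      intro j hj
      rw [Finset.card_product, Finset.card_singleton, one_mul, Int.card_Icc]
      have hcast : ((s:ℤ)) - 1 = ((s-1 : ℕ) : ℤ) := by
        have : 1 ≤ s := by omega
        push_cast [this]; ring
      rw [hcast, ← Int.natCast_ediv]
      have : 6*n + ((j / (s-1) : ℕ) : ℤ) + 1 - 6*n = ((j/(s-1) + 1 : ℕ) : ℤ) := by push_cast; ring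
      rw [this, Int.toNat_natCast]
    · intro x hx y hy hxy
      simp only [Finset.disjoint_left, Finset.mem_product, Finset.mem_singleton]
      rintro ⟨a, b⟩ ⟨h1, -⟩ ⟨h2, -⟩
      apply hxy
      have : (x:ℤ) = (y:ℤ) := by omega
      exact_mod_cast this
  -- key counting inequality in ℕ
  have hkey : N.choose 2 ≤ s * S.card := by
    have hterm : ∀ j : ℕ, j + 1 ≤ s * (j / (s-1) + 1) := by
      intro j
      obtain ⟨m, rfl⟩ : ∃ m, s = m + 1 := ⟨s - 1, by omega⟩
      simp only [Nat.add_sub_cancel]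
      have h1 : m * (j / m) + j % m = j := Nat.div_add_mod j m
      have h2 : j % m < m := Nat.mod_lt j (by omega)
      have h3 : (m + 1) * (j / m + 1) = m * (j / m) + (j / m) + m + 1 := by ring
      linarith [Nat.zero_le (j / m)]
    calc N.choose 2 = ∑ j ∈ Finset.range N, j := by
            rw [Nat.choose_two_right, ← Finset.sum_range_id_mul_two N,
              Nat.mul_div_cancel _ (by norm_num)]
      _ ≤ ∑ j ∈ Finset.range N, (j + 1) := Finset.sum_le_sum (fun j _ => by omega)
      _ ≤ ∑ j ∈ Finset.range N, s * (j / (s-1) + 1) := Finset.sum_le_sum (fun j _ => hterm j)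
      _ = s * ∑ j ∈ Finset.range N, (j / (s-1) + 1) := (Finset.mul_sum _ _ _).symm
      _ = s * S.card := by rw [hcardS]
  -- relate Nat.card to ncard and conclude
  have hcardT : Nat.card {q : ℤ × ℤ // ∀ i : ℕ, 1 ≤ i → i ≤ s →
        6 * ((i : ℤ) - 1) * N + N + 1 ≤ q.1 + ((i : ℤ) - 1) * q.2 ∧
        q.1 + ((i : ℤ) - 1) * q.2 ≤ 6 * ((i : ℤ) - 1) * N + 2 * N} = T.ncard :=
    Nat.card_coe_set_eq T
  have hle : S.card ≤ T.ncard := by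
    rw [← Set.ncard_coe_finset S]
    exact Set.ncard_le_ncard hST hTfin
  rw [hcardT]
  have hspos : (0:ℝ) < (s:ℝ) := by
    have h0 : 0 < s := by omega
    exact_mod_cast h0
  rw [one_div, inv_mul_le_iff₀ hspos]
  have : N.choose 2 ≤ s * T.ncard := hkey.trans (Nat.mul_le_mul_left _ hle)
  exact_mod_cast this
end

section
/- Let k > s ≥ 3 be integers, let N be a positive integer, and let S ⊆ {1,…,N} be a k-AP free set. Then there exist d₁,…,d_s ∈ {1,…,2N} such that, with S_i = { x + 6(i−1)N − 1 + d_i : x ∈ S } and A = S₁ ∪ ⋯ ∪ S_s, the set A contains at least (1/s)·binom(N,2)·|S|^s·(2N)^{−s} nontrivial s-term arithmetic progressions. -/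
open Finset Pointwise

lemma AP_mem {k : ℕ} {x d y : ℤ} : y ∈ AP k x d ↔ ∃ i < k, y = x + (i:ℤ) * d := by
  simp [AP, eq_comm]

lemma AP_param_inj {s : ℕ} (hs : 2 ≤ s) {a e a' e' : ℤ} (he : 0 < e) (he' : 0 < e')
    (h : AP s a e = AP s a' e') : a = a' ∧ e = e' := by
  have hmin : ∀ b f : ℤ, 0 < f → ∀ y ∈ AP s b f, b ≤ y := by
    intro b f hf y hy
    obtain ⟨i, _, rfl⟩ := AP_mem.mp hy
    nlinarith [Int.natCast_nonneg i]
  have hmax : ∀ b f : ℤ, 0 < f → ∀ y ∈ AP s b f, y ≤ b + ((s:ℤ) - 1) * f := by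
    intro b f hf y hy
    obtain ⟨i, hi, rfl⟩ := AP_mem.mp hy
    have : (i:ℤ) ≤ (s:ℤ) - 1 := by omega
    nlinarith
  have ha : a ∈ AP s a e := AP_mem.mpr ⟨0, by omega, by simp⟩
  have ha' : a' ∈ AP s a' e' := AP_mem.mpr ⟨0, by omega, by simp⟩
  have hm : a + ((s:ℤ)-1) * e ∈ AP s a e := by
    refine AP_mem.mpr ⟨s-1, by omega, ?_⟩
    have : ((s-1 : ℕ) : ℤ) = (s:ℤ) - 1 := by omega
    rw [this]
  have hm' : a' + ((s:ℤ)-1) * e' ∈ AP s a' e' := by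
    refine AP_mem.mpr ⟨s-1, by omega, ?_⟩
    have : ((s-1 : ℕ) : ℤ) = (s:ℤ) - 1 := by omega
    rw [this]
  have h1 : a = a' :=
    le_antisymm (hmin a e he a' (h ▸ ha')) (hmin a' e' he' a (h ▸ ha))
  have h2 : a + ((s:ℤ)-1) * e = a' + ((s:ℤ)-1) * e' :=
    le_antisymm (hmax a' e' he' _ (h ▸ hm)) (hmax a e he _ (h ▸ hm'))
  have hs1 : (s:ℤ) - 1 ≠ 0 := by omega
  refine ⟨h1, ?_⟩
  rw [h1] at h2
  exact mul_left_cancel₀ hs1 (by linarith)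

theorem exists_good_shifts (k s : ℕ) (hs : 3 ≤ s) (hk : s < k) (N : ℕ) (hN : 0 < N)
    (S : Finset ℤ) (hS : S ⊆ Finset.Icc 1 (N : ℤ)) (hSfree : APFree k ↑S) :
    ∃ d : Fin s → ℤ, (∀ i, d i ∈ Finset.Icc (1 : ℤ) (2 * N)) ∧
      (1 / (s : ℝ)) * (N.choose 2 : ℝ) * (S.card : ℝ) ^ s * ((2 * N : ℝ)) ^ (-(s : ℤ)) ≤
        (fAP s (Finset.univ.biUnion (fun i : Fin s =>
          S.image (fun x => x + 6 * ((i : ℕ) : ℤ) * N - 1 + d i))) : ℝ) := by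
  classical
  set A : (Fin s → ℤ) → Finset ℤ := fun d => Finset.univ.biUnion (fun i : Fin s =>
          S.image (fun x => x + 6 * ((i : ℕ) : ℤ) * N - 1 + d i)) with hAdef
  set D : Finset (Fin s → ℤ) := Fintype.piFinset (fun _ => Finset.Icc (1:ℤ) (2*N)) with hDdef
  have hDcard : D.card = (2*N)^s := by
    rw [hDdef, Fintype.card_piFinset]
    simp only [Int.card_Icc]
    rw [Finset.prod_const, Finset.card_univ, Fintype.card_fin]
    congr 1
    omega
  set G : Finset ((_ : ℕ) × ℕ) :=
    (Finset.range (N+1)).sigma (fun j => Finset.range (j/(s-1)+1)) with hGdef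
  set P : ((_ : ℕ) × ℕ) → Finset ℤ :=
    fun g => AP s (2*(N:ℤ) - (g.1 : ℤ)) (6*(N:ℤ) + (g.2 : ℤ)) with hPdef
  -- range facts for elements of G
  have hrange : ∀ g ∈ G, ∀ i : ℕ, i < s →
      (N:ℤ) ≤ (2*(N:ℤ) - (g.1:ℤ)) + (i:ℤ) * (g.2:ℤ) ∧
      (2*(N:ℤ) - (g.1:ℤ)) + (i:ℤ) * (g.2:ℤ) ≤ 2*(N:ℤ) := by
    intro g hg i hi
    rw [hGdef, Finset.mem_sigma, Finset.mem_range, Finset.mem_range] at hg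
    obtain ⟨h1, h2⟩ := hg
    have h3 : g.2 * (s-1) ≤ g.1 :=
      (Nat.le_div_iff_mul_le (by omega : 0 < s-1)).mp (by omega)
    have h4 : i * g.2 ≤ g.1 := by
      calc i * g.2 ≤ (s-1) * g.2 := Nat.mul_le_mul_right _ (by omega)
        _ = g.2 * (s-1) := Nat.mul_comm _ _
        _ ≤ g.1 := h3
    constructor
    · have : (i:ℤ) * (g.2:ℤ) ≥ 0 := by positivity
      omega
    · have : (i:ℤ) * (g.2:ℤ) ≤ (g.1:ℤ) := by exact_mod_cast h4
      omega
  -- count of good d for each g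
  have h1 : ∀ g ∈ G, S.card ^ s ≤ (D.filter (fun d => P g ⊆ A d)).card := by
    intro g hg
    have hr := hrange g hg
    have hcard : (Fintype.piFinset (fun _ : Fin s => S)).card = S.card ^ s := by
      rw [Fintype.card_piFinset]
      simp
    rw [← hcard]
    refine Finset.card_le_card_of_injOn
      (fun (x : Fin s → ℤ) (i : Fin s) => (2*(N:ℤ) - (g.1:ℤ)) + ((i:ℕ):ℤ) * (g.2:ℤ) + 1 - x i)
      ?_ ?_
    · intro x hx
      rw [Finset.mem_coe, Fintype.mem_piFinset] at hx
      rw [Finset.mem_coe, Finset.mem_filter]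
      constructor
      · rw [hDdef, Fintype.mem_piFinset]
        intro i
        have hxi := hS (hx i)
        rw [Finset.mem_Icc] at hxi ⊢
        have hri := hr i i.isLt
        dsimp only
        constructor
        · linarith [hri.1, hri.2, hxi.1, hxi.2]
        · linarith [hri.1, hri.2, hxi.1, hxi.2]
      · intro y hy
        rw [hPdef] at hy
        obtain ⟨i, hi, rfl⟩ := AP_mem.mp hy
        rw [hAdef]
        simp only [Finset.mem_biUnion, Finset.mem_univ, Finset.mem_image, true_and]
        refine ⟨⟨i, hi⟩, x ⟨i, hi⟩, hx _, ?_⟩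
        push_cast
        ring
    · intro x hx y hy hxy
      funext i
      have := congrFun hxy i
      simp only at this
      linarith
  -- filtered G injects into the AP subtype
  have h2 : ∀ d : Fin s → ℤ, (G.filter (fun g => P g ⊆ A d)).card ≤ fAP s (A d) := by
    intro d
    rw [fAP, ← Nat.card_eq_finsetCard]
    have hfin : Finite {Q : Finset ℤ // Q ⊆ A d ∧ ∃ x e : ℤ, e ≠ 0 ∧ Q = AP s x e} := by
      apply Finite.of_injective
        (fun Q : {Q : Finset ℤ // Q ⊆ A d ∧ ∃ x e : ℤ, e ≠ 0 ∧ Q = AP s x e} =>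
          (⟨Q.1, Finset.mem_powerset.mpr Q.2.1⟩ : {R : Finset ℤ // R ∈ (A d).powerset}))
      intro a b hab
      have h := congrArg Subtype.val hab
      dsimp only at h
      exact Subtype.ext h
    apply Nat.card_le_card_of_injective
      (fun g : {g // g ∈ G.filter (fun g => P g ⊆ A d)} =>
        (⟨P g.1, (Finset.mem_filter.mp g.2).2,
          2*(N:ℤ) - ((g.1).1 : ℤ), 6*(N:ℤ) + ((g.1).2 : ℤ), by omega, by simp only [hPdef]⟩ :
          {Q : Finset ℤ // Q ⊆ A d ∧ ∃ x e : ℤ, e ≠ 0 ∧ Q = AP s x e}))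
    intro g g' hgg'
    have hP : P g.1 = P g'.1 := by
      have := congrArg Subtype.val hgg'
      dsimp only at this
      exact this
    simp only [hPdef] at hP
    have := AP_param_inj (by omega) (by omega : (0:ℤ) < 6*(N:ℤ) + ((g.1).2:ℤ))
      (by omega : (0:ℤ) < 6*(N:ℤ) + ((g'.1).2:ℤ)) hP
    obtain ⟨ha, he⟩ := this
    have h5 : (g.1).1 = (g'.1).1 := by omega
    have h6 : (g.1).2 = (g'.1).2 := by omega
    exact Subtype.ext (Sigma.ext h5 (heq_of_eq h6))
  -- double counting
  have h3 : ∑ d ∈ D, (G.filter (fun g => P g ⊆ A d)).card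
      = ∑ g ∈ G, (D.filter (fun d => P g ⊆ A d)).card := by
    simp_rw [Finset.card_filter]
    exact Finset.sum_comm
  have htotal : G.card * S.card ^ s ≤ ∑ d ∈ D, fAP s (A d) := by
    calc G.card * S.card ^ s = ∑ _g ∈ G, S.card ^ s := by
          rw [Finset.sum_const, smul_eq_mul]
      _ ≤ ∑ g ∈ G, (D.filter (fun d => P g ⊆ A d)).card := Finset.sum_le_sum h1
      _ = ∑ d ∈ D, (G.filter (fun g => P g ⊆ A d)).card := h3.symm
      _ ≤ ∑ d ∈ D, fAP s (A d) := Finset.sum_le_sum (fun d _ => h2 d)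
  -- G.card lower bound
  have hGcard : N.choose 2 ≤ s * G.card := by
    rw [hGdef, Finset.card_sigma]
    simp only [Finset.card_range]
    have key : ∀ j ∈ Finset.range (N+1), j + 1 ≤ (s-1) * (j/(s-1)+1) := by
      intro j _
      have hd := Nat.div_add_mod j (s-1)
      have hm := Nat.mod_lt j (show 0 < s - 1 by omega)
      have hx : (s-1) * (j/(s-1)+1) = (s-1) * (j/(s-1)) + (s-1) := by ring
      omega
    calc N.choose 2 ≤ (N+1).choose 2 := Nat.choose_le_choose 2 (by omega)
      _ = ∑ j ∈ Finset.range (N+1), j := by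
          rw [Finset.sum_range_id, Nat.choose_two_right]
      _ ≤ ∑ j ∈ Finset.range (N+1), (j+1) := Finset.sum_le_sum (fun j _ => by omega)
      _ ≤ ∑ j ∈ Finset.range (N+1), (s-1) * (j/(s-1)+1) := Finset.sum_le_sum key
      _ = (s-1) * ∑ j ∈ Finset.range (N+1), (j/(s-1)+1) := by rw [Finset.mul_sum]
      _ ≤ s * ∑ j ∈ Finset.range (N+1), (j/(s-1)+1) :=
          Nat.mul_le_mul_right _ (by omega)
  -- pick a good d
  have hDne : D.Nonempty := by
    rw [hDdef, Fintype.piFinset_nonempty]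
    intro i
    exact ⟨1, Finset.mem_Icc.mpr ⟨le_refl _, by omega⟩⟩
  obtain ⟨d, hdD, hd⟩ := Finset.exists_le_of_sum_le hDne
    (show ∑ _d ∈ D, G.card * S.card ^ s ≤ ∑ d ∈ D, D.card * fAP s (A d) by
      rw [Finset.sum_const, smul_eq_mul, ← Finset.mul_sum]
      exact Nat.mul_le_mul_left _ htotal)
  refine ⟨d, ?_, ?_⟩
  · intro i
    rw [hDdef, Fintype.mem_piFinset] at hdD
    exact hdD i
  · -- final real arithmetic
    have hd' : (G.card : ℝ) * (S.card : ℝ) ^ s ≤ (2*(N:ℝ))^s * (fAP s (A d) : ℝ) := by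
      have := hd
      rw [hDcard] at this
      exact_mod_cast this
    have hG' : (N.choose 2 : ℝ) ≤ (s:ℝ) * (G.card : ℝ) := by exact_mod_cast hGcard
    have hspos : (0:ℝ) < s := by positivity
    have hpow : (0:ℝ) < (2*(N:ℝ))^s := by positivity
    have hzp : ((2 * (N:ℝ))) ^ (-(s : ℤ)) = ((2*(N:ℝ))^s)⁻¹ := by
      rw [zpow_neg, zpow_natCast]
    rw [hzp]
    have step1 : (1 / (s : ℝ)) * (N.choose 2 : ℝ) * (S.card : ℝ) ^ s
        ≤ (G.card : ℝ) * (S.card : ℝ) ^ s := by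
      apply mul_le_mul_of_nonneg_right _ (by positivity)
      rw [div_mul_eq_mul_div, one_mul, div_le_iff₀ hspos]
      linarith [hG']
    calc (1 / (s : ℝ)) * (N.choose 2 : ℝ) * (S.card : ℝ) ^ s * ((2*(N:ℝ))^s)⁻¹
        ≤ ((2*(N:ℝ))^s * (fAP s (A d) : ℝ)) * ((2*(N:ℝ))^s)⁻¹ := by
          apply mul_le_mul_of_nonneg_right (le_trans step1 hd') (by positivity)
      _ = (fAP s (A d) : ℝ) := by field_simp
end

section
/- For all integers k > s ≥ 3 and every ε > 0, there exists n₀ such that for all n ≥ n₀, f_{s,k}(n) ≥ n^{2−ε}; that is, a k-AP free set of n integers can contain n^{2−o(1)} nontrivial s-term arithmetic progressions. -/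
open Finset Pointwise

namespace FSKAux
open Filter

/-! ### Basic AP lemmas -/

lemma mem_AP {k : ℕ} {x d z : ℤ} : z ∈ AP k x d ↔ ∃ i : ℕ, i < k ∧ z = x + (i:ℤ) * d := by
  simp [AP, eq_comm]

lemma AP_mono {s k : ℕ} (h : s ≤ k) (x d : ℤ) : AP s x d ⊆ AP k x d := by
  intro z hz
  rcases mem_AP.1 hz with ⟨i, hi, rfl⟩
  exact mem_AP.2 ⟨i, lt_of_lt_of_le hi h, rfl⟩

lemma AP_reverse (k : ℕ) (x d : ℤ) (_hk : 1 ≤ k) :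
    AP k x d = AP k (x + ((k:ℤ)-1) * d) (-d) := by
  ext z
  simp only [mem_AP]
  constructor
  · rintro ⟨i, hi, rfl⟩
    refine ⟨k - 1 - i, by omega, ?_⟩
    have : ((k - 1 - i : ℕ) : ℤ) = (k:ℤ) - 1 - i := by
      omega
    rw [this]; ring
  · rintro ⟨i, hi, rfl⟩
    refine ⟨k - 1 - i, by omega, ?_⟩
    have : ((k - 1 - i : ℕ) : ℤ) = (k:ℤ) - 1 - i := by
      omega
    rw [this]; ring

lemma AP_min {s : ℕ} (hs : 1 ≤ s) {x d : ℤ} (hd : 0 < d) :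
    x ∈ AP s x d ∧ ∀ z ∈ AP s x d, x ≤ z := by
  constructor
  · exact mem_AP.2 ⟨0, by omega, by simp⟩
  · intro z hz
    rcases mem_AP.1 hz with ⟨i, _, rfl⟩
    nlinarith [Int.ofNat_nonneg i]

lemma AP_max {s : ℕ} (hs : 1 ≤ s) {x d : ℤ} (hd : 0 < d) :
    (x + ((s:ℤ)-1)*d) ∈ AP s x d ∧ ∀ z ∈ AP s x d, z ≤ x + ((s:ℤ)-1)*d := by
  constructor
  · refine mem_AP.2 ⟨s - 1, by omega, ?_⟩
    have : ((s - 1 : ℕ) : ℤ) = (s:ℤ) - 1 := by omega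
    rw [this]
  · intro z hz
    rcases mem_AP.1 hz with ⟨i, hi, rfl⟩
    have : (i:ℤ) ≤ (s:ℤ) - 1 := by omega
    nlinarith

lemma AP_inj {s : ℕ} (hs : 2 ≤ s) {x d x' d' : ℤ} (hd : 0 < d) (hd' : 0 < d')
    (h : AP s x d = AP s x' d') : x = x' ∧ d = d' := by
  have h1 := AP_min (x := x) (by omega : 1 ≤ s) hd
  have h2 := AP_min (x := x') (by omega : 1 ≤ s) hd'
  have hx : x = x' := by
    have a1 := h2.2 x (h ▸ h1.1)
    have a2 := h1.2 x' (h ▸ h2.1)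
    omega
  have h3 := AP_max (x := x) (by omega : 1 ≤ s) hd
  have h4 := AP_max (x := x') (by omega : 1 ≤ s) hd'
  have hm : x + ((s:ℤ)-1)*d = x' + ((s:ℤ)-1)*d' := by
    have a1 := h4.2 _ (h ▸ h3.1)
    have a2 := h3.2 _ (h ▸ h4.1)
    omega
  constructor
  · exact hx
  · have hs1 : (1:ℤ) ≤ (s:ℤ) - 1 := by
      have : (2:ℤ) ≤ (s:ℤ) := by exact_mod_cast hs
      omega
    have := hm
    rw [hx] at this
    have h5 : ((s:ℤ)-1) * d = ((s:ℤ)-1) * d' := by omega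
    exact mul_left_cancel₀ (by omega) h5


variable {D : ℕ}

def lsum (x : Fin D → ℤ) : ℤ := ∑ a, x a
def sq (x : Fin D → ℤ) : ℤ := ∑ a, (x a)^2
def ip (x y : Fin D → ℤ) : ℤ := ∑ a, x a * y a
def phi (M : ℤ) (x : Fin D → ℤ) : ℤ := ∑ a, x a * M ^ (a : ℕ)

lemma lsum_add_smul (u e : Fin D → ℤ) (j : ℤ) :
    lsum (fun a => u a + j * e a) = lsum u + j * lsum e := by
  simp [lsum, Finset.sum_add_distrib, Finset.mul_sum]

lemma sq_add_smul (u e : Fin D → ℤ) (j : ℤ) :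
    sq (fun a => u a + j * e a) = sq u + 2 * j * ip u e + j^2 * sq e := by
  simp only [sq, ip]
  rw [Finset.mul_sum, Finset.mul_sum, ← Finset.sum_add_distrib, ← Finset.sum_add_distrib]
  exact Finset.sum_congr rfl (fun a _ => by ring)

lemma sq_nonneg' (x : Fin D → ℤ) : 0 ≤ sq x :=
  Finset.sum_nonneg fun a _ => sq_nonneg _

lemma eq_zero_of_sq_eq_zero {x : Fin D → ℤ} (h : sq x = 0) : x = 0 := by
  have : ∀ a ∈ Finset.univ, (x a)^2 = 0 := by
    refine (Finset.sum_eq_zero_iff_of_nonneg (fun a _ => sq_nonneg _)).1 h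
  funext a
  have := this a (Finset.mem_univ a)
  exact pow_eq_zero_iff (by norm_num) |>.1 this

lemma phi_add (x y : Fin D → ℤ) (M : ℤ) :
    phi M (fun a => x a + y a) = phi M x + phi M y := by
  simp [phi, add_mul, Finset.sum_add_distrib]

/-- digit uniqueness: if all |x a| < M and ∑ x a M^a = 0 then x = 0 -/
lemma digits_eq_zero {M : ℤ} : ∀ {D : ℕ} (x : Fin D → ℤ),
    (∀ a, |x a| < M) → phi M x = 0 → x = 0 := by
  intro D
  induction D with
  | zero => intro x _ _; funext a; exact absurd a.2 (by omega)
  | succ n ih =>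
    intro x hb hphi
    have hM : 0 < M := lt_of_le_of_lt (abs_nonneg _) (hb 0)
    have hsum : phi M x = x 0 + M * ∑ a : Fin n, x a.succ * M ^ (a:ℕ) := by
      rw [phi, Fin.sum_univ_succ]
      simp only [Fin.val_zero, pow_zero, mul_one, Fin.val_succ]
      rw [Finset.mul_sum]
      congr 1
      exact Finset.sum_congr rfl (fun a _ => by ring)
    have hdvd : M ∣ x 0 := by
      refine ⟨-(∑ a : Fin n, x a.succ * M ^ (a:ℕ)), ?_⟩
      have := hphi
      rw [hsum] at this
      linarith
    have hx0 : x 0 = 0 := by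
      rcases hdvd with ⟨c, hc⟩
      by_contra h0
      have : 0 < |x 0| := abs_pos.2 h0
      have h1 : 1 ≤ |c| := by
        rcases eq_or_ne c 0 with rfl | hc0
        · simp [hc] at h0 <;> omega
        · exact Int.one_le_abs (by exact_mod_cast hc0)
      have : M ≤ |x 0| := by
        rw [hc, abs_mul, abs_of_pos hM]
        nlinarith [abs_nonneg c]
      exact absurd (hb 0) (by omega)
    have htail : (fun a : Fin n => x a.succ) = 0 := by
      apply ih
      · intro a; exact hb a.succ
      · have := hphi
        rw [hsum, hx0] at this
        simp only [zero_add] at this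
        have : ∑ a : Fin n, x a.succ * M ^ (a:ℕ) = 0 := by
          rcases mul_eq_zero.1 this with h | h
          · omega
          · exact h
        simpa [phi] using this
    funext a
    rcases Fin.eq_zero_or_eq_succ a with rfl | ⟨b, rfl⟩
    · exact hx0
    · exact congrFun htail b

lemma phi_inj {M : ℤ} {L : ℤ} (hL : 2*L < M) {x y : Fin D → ℤ}
    (hx : ∀ a, 0 ≤ x a ∧ x a ≤ L) (hy : ∀ a, 0 ≤ y a ∧ y a ≤ L)
    (h : phi M x = phi M y) : x = y := by
  have := digits_eq_zero (M := M) (fun a => x a - y a)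
    (fun a => by
      have h1 := hx a; have h2 := hy a
      have hr : (fun a => x a - y a) a = x a - y a := rfl
      rw [abs_lt]; omega)
    (by
      have : phi M (fun a => x a - y a) = phi M x - phi M y := by
        simp [phi, sub_mul, Finset.sum_sub_distrib]
      rw [this, h, sub_self])
  funext a
  have h2 : x a - y a = 0 := by simpa using congrFun this a
  omega

lemma phi_nonneg {M : ℤ} (hM : 0 ≤ M) {x : Fin D → ℤ} (hx : ∀ a, 0 ≤ x a) :
    0 ≤ phi M x :=
  Finset.sum_nonneg fun a _ => mul_nonneg (hx a) (pow_nonneg hM _)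

lemma phi_pos {M : ℤ} (hM : 0 < M) {x : Fin D → ℤ} (hx : ∀ a, 0 ≤ x a) (hx0 : x ≠ 0) :
    0 < phi M x := by
  have : ∃ a, x a ≠ 0 := by
    by_contra h
    push_neg at h
    exact hx0 (funext h)
  rcases this with ⟨a, ha⟩
  have h1 : 0 < x a * M ^ (a:ℕ) :=
    mul_pos (lt_of_le_of_ne (hx a) (Ne.symm ha)) (pow_pos hM _)
  calc (0:ℤ) < x a * M ^ (a:ℕ) := h1
    _ ≤ phi M x := Finset.single_le_sum (fun b _ => mul_nonneg (hx b) (pow_nonneg hM.le _))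
        (Finset.mem_univ a)

lemma phi_lt {M : ℤ} (hM : 0 < M) {x : Fin D → ℤ} (hx : ∀ a, 0 ≤ x a ∧ x a ≤ M - 1) :
    phi M x < M ^ D := by
  have h1 : phi M x ≤ ∑ a : Fin D, (M-1) * M ^ (a:ℕ) :=
    Finset.sum_le_sum fun a _ => mul_le_mul_of_nonneg_right (hx a).2 (pow_nonneg hM.le _)
  have h2 : ∑ a : Fin D, (M-1) * M ^ (a:ℕ) = M ^ D - 1 := by
    rw [Fin.sum_univ_eq_sum_range (fun i => (M-1) * M ^ i) D, ← Finset.mul_sum,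
      mul_comm, geom_sum_mul]
  omega

lemma lsum_pos {x : Fin D → ℤ} (hx : ∀ a, 0 ≤ x a) (hx0 : x ≠ 0) : 1 ≤ lsum x := by
  have : ∃ a, x a ≠ 0 := by
    by_contra h
    push_neg at h
    exact hx0 (funext h)
  rcases this with ⟨a, ha⟩
  have h1 : 1 ≤ x a := lt_of_le_of_ne (hx a) (Ne.symm ha)
  calc (1:ℤ) ≤ x a := h1
    _ ≤ lsum x := Finset.single_le_sum (fun b _ => hx b) (Finset.mem_univ a)

lemma no_long_AP {s : ℕ} (hs : 2 ≤ s)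
    (h r h' r' c : ℤ) (hh' : 1 ≤ h')
    (A : Finset (Fin D → ℤ))
    (hA : ∀ t ∈ A, ∃ i : ℕ, i < s ∧ lsum t = h + (i:ℤ) * h' ∧
      sq t = r + 2*(i:ℤ)*c + (i:ℤ)^2*r')
    (u e : Fin D → ℤ) (he : e ≠ 0)
    (hmem : ∀ j : ℕ, j ≤ s → (fun a => u a + (j:ℤ) * e a) ∈ A) : False := by
  have key : ∀ j : ℕ, j ≤ s → ∃ i : ℕ, i < s ∧
      lsum u + (j:ℤ) * lsum e = h + (i:ℤ) * h' ∧
      sq u + 2*(j:ℤ)*ip u e + (j:ℤ)^2 * sq e = r + 2*(i:ℤ)*c + (i:ℤ)^2*r' := by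
    intro j hj
    obtain ⟨i, hi, hl, hq⟩ := hA _ (hmem j hj)
    exact ⟨i, hi, by rw [← lsum_add_smul u e (j:ℤ)]; exact hl,
      by rw [← sq_add_smul u e (j:ℤ)]; exact hq⟩
  choose I hIlt hIl hIq using key
  have h0 : (0:ℕ) ≤ s := Nat.zero_le s
  have h1 : (1:ℕ) ≤ s := by omega
  have h2 : (2:ℕ) ≤ s := hs
  have hh0 : h' ≠ 0 := by omega
  have e0 := hIl 0 h0
  have e1 := hIl 1 h1
  push_cast at e0 e1
  have hE : ((I 1 h1 :ℤ) - (I 0 h0 : ℤ)) * h' = lsum e := by nlinarith [e0, e1]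
  by_cases hd : ((I 1 h1 :ℤ)) = (I 0 h0 : ℤ)
  · -- constant level
    have hE0 : lsum e = 0 := by rw [← hE, hd]; ring
    have hconst : ∀ (j : ℕ) (hj : j ≤ s), ((I j hj : ℕ) :ℤ) = (I 0 h0 : ℤ) := by
      intro j hj
      have ej := hIl j hj
      push_cast at ej
      have heq : ((I j hj : ℕ):ℤ) * h' = ((I 0 h0 : ℕ):ℤ) * h' := by
        rw [hE0] at ej; linarith
      exact mul_right_cancel₀ hh0 heq
    have q0 := hIq 0 h0
    have q1 := hIq 1 h1
    have q2 := hIq 2 h2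
    rw [hconst 1 h1] at q1
    rw [hconst 2 h2] at q2
    push_cast at q0 q1 q2
    have hsq : sq e = 0 := by nlinarith [q0, q1, q2]
    exact he (eq_zero_of_sq_eq_zero hsq)
  · -- level moves: impossible
    have es := hIl s le_rfl
    push_cast at es
    have hIs : ((I s le_rfl : ℕ):ℤ) - (I 0 h0 : ℤ) =
        (s:ℤ) * (((I 1 h1 : ℕ):ℤ) - (I 0 h0 : ℤ)) := by
      have heq : (((I s le_rfl : ℕ):ℤ) - (I 0 h0 : ℤ)) * h' =
          ((s:ℤ) * (((I 1 h1 : ℕ):ℤ) - (I 0 h0 : ℤ))) * h' := by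
        have := hE
        nlinarith [es, e0, hE]
      exact mul_right_cancel₀ hh0 heq
    have b0 : ((I 0 h0 : ℕ):ℤ) < s := by exact_mod_cast hIlt 0 h0
    have b1 : ((I 1 h1 : ℕ):ℤ) < s := by exact_mod_cast hIlt 1 h1
    have bs : ((I s le_rfl : ℕ):ℤ) < s := by exact_mod_cast hIlt s le_rfl
    have n0 : (0:ℤ) ≤ ((I 0 h0 : ℕ):ℤ) := Int.ofNat_nonneg _
    have n1 : (0:ℤ) ≤ ((I 1 h1 : ℕ):ℤ) := Int.ofNat_nonneg _
    have ns : (0:ℤ) ≤ ((I s le_rfl : ℕ):ℤ) := Int.ofNat_nonneg _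
    have hss : (2:ℤ) ≤ (s:ℤ) := by exact_mod_cast hs
    rcases lt_or_gt_of_ne hd with hlt | hgt
    · nlinarith [hIs]
    · nlinarith [hIs]


-- extra helpers, to be appended inside FSKAux namespace
section Extra
open Finset

noncomputable def boxW (w D : ℕ) : Finset (Fin D → ℤ) :=
  Fintype.piFinset (fun _ : Fin D => Finset.Icc (0:ℤ) ((w:ℤ)-1))

lemma mem_boxW {w D : ℕ} {x : Fin D → ℤ} :
    x ∈ boxW w D ↔ ∀ a, 0 ≤ x a ∧ x a ≤ (w:ℤ)-1 := by
  simp [boxW, Fintype.mem_piFinset, Finset.mem_Icc]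

lemma boxW_card (w D : ℕ) : (boxW w D).card = w ^ D := by
  rw [boxW, Fintype.card_piFinset]
  have h1 : (Finset.Icc (0:ℤ) ((w:ℤ)-1)).card = w := by
    rw [Int.card_Icc]; omega
  simp [h1]

lemma sum_bound {D : ℕ} {f : Fin D → ℤ} {Cb : ℤ} (hf : ∀ a, 0 ≤ f a ∧ f a ≤ Cb) :
    0 ≤ (∑ a, f a) ∧ (∑ a, f a) ≤ (D:ℤ) * Cb := by
  constructor
  · exact Finset.sum_nonneg fun a _ => (hf a).1
  · calc ∑ a, f a ≤ ∑ _a : Fin D, Cb := Finset.sum_le_sum fun a _ => (hf a).2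
      _ = (D:ℤ) * Cb := by simp [Finset.sum_const, mul_comm]

lemma phi_add_smul {D : ℕ} (x y : Fin D → ℤ) (j M : ℤ) :
    phi M (fun a => x a + j * y a) = phi M x + j * phi M y := by
  simp only [phi]
  rw [Finset.mul_sum, ← Finset.sum_add_distrib]
  exact Finset.sum_congr rfl (fun a _ => by ring)

end Extra

set_option maxHeartbeats 2000000 in
theorem construction (s k m D n g : ℕ) (hs : 3 ≤ s) (hk : s < k) (hm : 2 ≤ m)
    (hn : (s*m)^D ≤ n)
    (hg : (D*m^2+1)^5 * g ≤ m^D * (m^D - 1)) :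
    g ≤ fsk s k n := by
  classical
  rcases Nat.eq_zero_or_pos g with rfl | hgpos
  · exact Nat.zero_le _
  have hsm2 : 2 ≤ s*m := by nlinarith
  -- ## the box and pigeonhole
  have hboxcard : (boxW m D).card = m^D := boxW_card m D
  have hbox0 : (0 : Fin D → ℤ) ∈ boxW m D := by
    rw [mem_boxW]; intro a; simp; omega
  set P : Finset ((Fin D → ℤ) × (Fin D → ℤ)) := boxW m D ×ˢ ((boxW m D).erase 0) with hP
  have hPcard : P.card = m^D * (m^D - 1) := by
    rw [hP, Finset.card_product, Finset.card_erase_of_mem hbox0, hboxcard]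
  set B : ℤ := ((D * m^2 : ℕ) : ℤ) with hB
  set T5 : Finset (ℤ×ℤ×ℤ×ℤ×ℤ) :=
    Finset.Icc 0 B ×ˢ Finset.Icc 0 B ×ˢ Finset.Icc 0 B ×ˢ Finset.Icc 0 B ×ˢ Finset.Icc 0 B
    with hT5
  have hIccB : (Finset.Icc (0:ℤ) B).card = D*m^2+1 := by
    rw [Int.card_Icc, hB]; omega
  have hT5card : T5.card = (D*m^2+1)^5 := by
    rw [hT5]
    simp only [Finset.card_product, hIccB]
    ring
  set stats : (Fin D → ℤ) × (Fin D → ℤ) → ℤ×ℤ×ℤ×ℤ×ℤ :=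
    fun p => (lsum p.1, sq p.1, lsum p.2, sq p.2, ip p.1 p.2) with hstats
  have hentry : ∀ x : Fin D → ℤ, x ∈ boxW m D → ∀ a, 0 ≤ x a ∧ x a ≤ (m:ℤ)-1 :=
    fun x hx => mem_boxW.1 hx
  have hm2 : ((m:ℤ)-1) ≤ (m:ℤ)^2 := by nlinarith [Int.ofNat_nonneg m]
  have hmsq : ((m:ℤ)-1)^2 ≤ (m:ℤ)^2 := by nlinarith [Int.ofNat_nonneg m]
  have hmaps : ∀ p ∈ P, stats p ∈ T5 := by
    rintro ⟨x, y⟩ hp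
    rw [hP, Finset.mem_product] at hp
    have hx := hentry x hp.1
    have hy := hentry y (Finset.mem_of_mem_erase hp.2)
    have bx1 := sum_bound hx
    have by1 := sum_bound hy
    have bx2 := sum_bound (f := fun a => (x a)^2) (Cb := (m:ℤ)^2)
      (fun a => ⟨sq_nonneg _, le_trans (pow_le_pow_left₀ (hx a).1 (hx a).2 2) hmsq⟩)
    have by2 := sum_bound (f := fun a => (y a)^2) (Cb := (m:ℤ)^2)
      (fun a => ⟨sq_nonneg _, le_trans (pow_le_pow_left₀ (hy a).1 (hy a).2 2) hmsq⟩)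
    have bxy := sum_bound (f := fun a => x a * y a) (Cb := (m:ℤ)^2)
      (fun a => ⟨mul_nonneg (hx a).1 (hy a).1,
        by
          have h1 : x a * y a ≤ ((m:ℤ)-1)*((m:ℤ)-1) :=
            mul_le_mul (hx a).2 (hy a).2 (hy a).1 (by omega)
          show x a * y a ≤ (m:ℤ)^2
          nlinarith [h1]⟩)
    have hBval : ((D:ℤ) * ((m:ℤ)-1)) ≤ B ∧ ((D:ℤ) * (m:ℤ)^2) ≤ B := by
      constructor
      · rw [hB]; push_cast; nlinarith [Int.ofNat_nonneg D]
      · rw [hB]; push_cast; nlinarith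
    rw [hT5, hstats]
    simp only [Finset.mem_product, Finset.mem_Icc]
    refine ⟨⟨bx1.1, ?_⟩, ⟨bx2.1, ?_⟩, ⟨by1.1, ?_⟩, ⟨by2.1, ?_⟩, ⟨bxy.1, ?_⟩⟩
    · exact le_trans bx1.2 hBval.1
    · exact le_trans bx2.2 hBval.2
    · exact le_trans by1.2 hBval.1
    · exact le_trans by2.2 hBval.2
    · exact le_trans bxy.2 hBval.2
  have hT5ne : T5.Nonempty := by
    refine ⟨(0,0,0,0,0), ?_⟩
    rw [hT5]
    have hB0 : (0:ℤ) ≤ B := by rw [hB]; positivity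
    simp only [Finset.mem_product, Finset.mem_Icc]
    norm_num [hB0]
  obtain ⟨y5, _, hfiber⟩ := Finset.exists_le_card_fiber_of_mul_le_card_of_maps_to hmaps hT5ne
      (by rw [hT5card, hPcard]; exact hg)
  obtain ⟨h, r, h', r', c⟩ := y5
  set G := {p ∈ P | stats p = (h, r, h', r', c)} with hGdef
  have hGcard : g ≤ G.card := hfiber
  have hGmem : ∀ p ∈ G, p.1 ∈ boxW m D ∧ p.2 ∈ boxW m D ∧ p.2 ≠ 0 ∧
      lsum p.1 = h ∧ sq p.1 = r ∧ lsum p.2 = h' ∧ sq p.2 = r' ∧ ip p.1 p.2 = c := by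
    intro p hp
    rw [hGdef, Finset.mem_filter, hP, Finset.mem_product] at hp
    obtain ⟨⟨hp1, hp2⟩, heq⟩ := hp
    rw [hstats] at heq
    simp only [Prod.mk.injEq] at heq
    exact ⟨hp1, Finset.mem_of_mem_erase hp2, Finset.ne_of_mem_erase hp2,
      heq.1, heq.2.1, heq.2.2.1, heq.2.2.2.1, heq.2.2.2.2⟩
  have hGne : G.Nonempty := Finset.card_pos.1 (lt_of_lt_of_le hgpos hGcard)
  have hh' : 1 ≤ h' := by
    obtain ⟨p0, hp0⟩ := hGne
    obtain ⟨_, hb, hne, _, _, hl, _, _⟩ := hGmem p0 hp0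
    rw [← hl]
    exact lsum_pos (fun a => (mem_boxW.1 hb a).1) hne
  -- ## the construction set A'
  have hs1 : 1 ≤ s := by omega
  set Lz : ℤ := (s:ℤ)*(m:ℤ) - 1 with hLz
  have hLz0 : 0 ≤ Lz := by rw [hLz]; push_cast; nlinarith
  set M : ℤ := 2*Lz + 1 with hMdef
  have hMpos : 0 < M := by omega
  set A' : Finset (Fin D → ℤ) :=
    (G ×ˢ Finset.range s).image (fun q => fun a => q.1.1 a + (q.2:ℤ) * q.1.2 a) with hA'
  have hA'mem : ∀ t ∈ A', ∃ i : ℕ, i < s ∧ ∃ p, p ∈ G ∧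
      t = fun a => p.1 a + (i:ℤ) * p.2 a := by
    intro t ht
    rw [hA', Finset.mem_image] at ht
    obtain ⟨⟨p, i⟩, hq, rfl⟩ := ht
    rw [Finset.mem_product] at hq
    exact ⟨i, Finset.mem_range.1 hq.2, p, hq.1, rfl⟩
  have hA'in : ∀ p i, p ∈ G → i < s → (fun a => p.1 a + (i:ℤ) * p.2 a) ∈ A' := by
    intro p i hp hi
    rw [hA', Finset.mem_image]
    exact ⟨(p, i), Finset.mem_product.2 ⟨hp, Finset.mem_range.2 hi⟩, rfl⟩
  have hA'bound : ∀ t ∈ A', ∀ a, 0 ≤ t a ∧ t a ≤ Lz := by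
    intro t ht a
    obtain ⟨i, hi, p, hp, rfl⟩ := hA'mem t ht
    obtain ⟨hb1, hb2, -, -⟩ := hGmem p hp
    have e1 := mem_boxW.1 hb1 a
    have e2 := mem_boxW.1 hb2 a
    have hi' : (i:ℤ) ≤ (s:ℤ) - 1 := by
      have : (i:ℤ) < (s:ℤ) := by exact_mod_cast hi
      omega
    have hs1' : (1:ℤ) ≤ (s:ℤ) := by exact_mod_cast hs1
    constructor
    · show 0 ≤ p.1 a + (i:ℤ) * p.2 a
      have := mul_nonneg (Int.ofNat_nonneg i) e2.1
      omega
    · show p.1 a + (i:ℤ) * p.2 a ≤ Lz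
      rw [hLz]
      have h3 : (i:ℤ) * p.2 a ≤ ((s:ℤ)-1) * ((m:ℤ)-1) :=
        mul_le_mul hi' e2.2 e2.1 (by omega)
      nlinarith [e1.2, h3]
  have hA'stat : ∀ t ∈ A', ∃ i : ℕ, i < s ∧ lsum t = h + (i:ℤ)*h' ∧
      sq t = r + 2*(i:ℤ)*c + (i:ℤ)^2*r' := by
    intro t ht
    obtain ⟨i, hi, p, hp, rfl⟩ := hA'mem t ht
    obtain ⟨-, -, -, e1, e2, e3, e4, e5⟩ := hGmem p hp
    refine ⟨i, hi, ?_, ?_⟩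
    · rw [lsum_add_smul, e1, e3]
    · rw [sq_add_smul, e2, e4, e5]
  -- ## embedding
  have hinj : ∀ t1 ∈ A', ∀ t2 ∈ A', phi M t1 = phi M t2 → t1 = t2 := by
    intro t1 h1 t2 h2 heq
    exact phi_inj (L := Lz) (by omega) (hA'bound t1 h1) (hA'bound t2 h2) heq
  set Aphi : Finset ℤ := A'.image (phi M) with hAphi
  have hAphicard : Aphi.card = A'.card :=
    Finset.card_image_of_injOn (fun t1 h1 t2 h2 => hinj t1 h1 t2 h2)
  have hAphirange : ∀ z ∈ Aphi, 0 ≤ z ∧ z < M^D := by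
    intro z hz
    rw [hAphi, Finset.mem_image] at hz
    obtain ⟨t, ht, rfl⟩ := hz
    refine ⟨phi_nonneg hMpos.le (fun a => (hA'bound t ht a).1), ?_⟩
    exact phi_lt hMpos (fun a => ⟨(hA'bound t ht a).1, by
      have := (hA'bound t ht a).2; omega⟩)
  have hA'card : A'.card ≤ (s*m)^D := by
    have hsub : A' ⊆ boxW (s*m) D := by
      intro t ht
      rw [mem_boxW]
      intro a
      have h1 := hA'bound t ht a
      refine ⟨h1.1, ?_⟩
      have h2 := h1.2
      rw [hLz] at h2
      push_cast
      omega
    calc A'.card ≤ (boxW (s*m) D).card := Finset.card_le_card hsub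
      _ = (s*m)^D := boxW_card _ _
  have hAphile : Aphi.card ≤ n := by
    rw [hAphicard]; exact le_trans hA'card hn
  -- ## padding
  have hMD : 0 < M^D := pow_pos hMpos D
  set Cc : ℤ := 2 * M^D + 1 with hCc
  have hCcpos : 0 < Cc := by rw [hCc]; omega
  set pad : Finset ℤ := (Finset.range (n - Aphi.card)).image (fun j => Cc * 3^j) with hpad
  have hpadinj : Function.Injective (fun j : ℕ => Cc * 3^j) := by
    intro j l hjl
    simp only at hjl
    have h3 : (3:ℤ)^j = 3^l := mul_left_cancel₀ hCcpos.ne' hjl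
    exact Int.pow_right_injective (by norm_num) h3
  have hpadcard : pad.card = n - Aphi.card := by
    rw [hpad, Finset.card_image_of_injective _ hpadinj, Finset.card_range]
  have hpadmem : ∀ z ∈ pad, ∃ j : ℕ, z = Cc * 3^j := by
    intro z hz
    rw [hpad, Finset.mem_image] at hz
    obtain ⟨j, -, rfl⟩ := hz
    exact ⟨j, rfl⟩
  have hpow3 : ∀ j : ℕ, (1:ℤ) ≤ 3^j := fun j => by calc (1:ℤ) = 3^0 := by norm_num
    _ ≤ 3^j := pow_le_pow_right₀ (by norm_num) (Nat.zero_le j)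
  have hpadlb : ∀ z ∈ pad, Cc ≤ z := by
    intro z hz
    obtain ⟨j, rfl⟩ := hpadmem z hz
    calc Cc = Cc * 1 := by ring
      _ ≤ Cc * 3^j := mul_le_mul_of_nonneg_left (hpow3 j) hCcpos.le
  have hdisj : Disjoint Aphi pad := by
    rw [Finset.disjoint_left]
    intro z hz hz2
    have h1 := (hAphirange z hz).2
    have h2 := hpadlb z hz2
    rw [hCc] at h2
    omega
  set X : Finset ℤ := Aphi ∪ pad with hX
  have hXcard : X.card = n := by
    rw [hX, Finset.card_union_of_disjoint hdisj, hpadcard]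
    omega
  -- ## no 3-AP touches the padding
  have hXfacts : ∀ z ∈ X, (0 ≤ z) ∧ (z ∈ Aphi ∧ z < M^D ∨ ∃ j:ℕ, z = Cc*3^j) := by
    intro z hz
    rw [hX, Finset.mem_union] at hz
    rcases hz with hz | hz
    · exact ⟨(hAphirange z hz).1, Or.inl ⟨hz, (hAphirange z hz).2⟩⟩
    · obtain ⟨j, hj⟩ := hpadmem z hz
      exact ⟨le_trans hCcpos.le (hpadlb z hz), Or.inr ⟨j, hj⟩⟩
  have h3AP : ∀ a b c', a ∈ X → b ∈ X → c' ∈ X → a < b → b < c' → a + c' = 2*b →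
      a ∈ Aphi ∧ b ∈ Aphi ∧ c' ∈ Aphi := by
    intro a b c' ha hb hc hab hbc habc
    obtain ⟨ha0, hacase⟩ := hXfacts a ha
    obtain ⟨hb0, hbcase⟩ := hXfacts b hb
    obtain ⟨hc0, hccase⟩ := hXfacts c' hc
    have hcA : c' ∈ Aphi ∧ c' < M^D := by
      rcases hccase with hcc | ⟨j, rfl⟩
      · exact hcc
      · exfalso
        rcases hbcase with ⟨hbA, hblt⟩ | ⟨l, rfl⟩
        · have h1 : Cc ≤ Cc * 3^j := by
            calc Cc = Cc * 1 := by ring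
              _ ≤ Cc * 3^j := mul_le_mul_of_nonneg_left (hpow3 j) hCcpos.le
          have h5 : 2*M^D+1 ≤ Cc * 3^j := le_trans hCc.symm.le h1
          omega
        · have hlj : l < j := by
            by_contra hc2
            push_neg at hc2
            have h1 : (3:ℤ)^j ≤ 3^l := pow_le_pow_right₀ (by norm_num) hc2
            have h2 : Cc * 3^j ≤ Cc * 3^l := mul_le_mul_of_nonneg_left h1 hCcpos.le
            omega
          have h3 : 3 * (Cc * 3^l) ≤ Cc * 3^j := by
            have h1 : (3:ℤ)^(l+1) ≤ 3^j := pow_le_pow_right₀ (by norm_num) hlj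
            calc 3*(Cc*3^l) = Cc*3^(l+1) := by ring
              _ ≤ Cc*3^j := mul_le_mul_of_nonneg_left h1 hCcpos.le
          have h4 : Cc ≤ Cc * 3^l := by
            calc Cc = Cc * 1 := by ring
              _ ≤ Cc * 3^l := mul_le_mul_of_nonneg_left (hpow3 l) hCcpos.le
          omega
    have hbA : b ∈ Aphi ∧ b < M^D := by
      rcases hbcase with hbb | ⟨l, rfl⟩
      · exact hbb
      · exfalso
        have h4 : Cc ≤ Cc * 3^l := by
          calc Cc = Cc * 1 := by ring
            _ ≤ Cc * 3^l := mul_le_mul_of_nonneg_left (hpow3 l) hCcpos.le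
        have h6 := hcA.2
        have h5 : 2*M^D+1 ≤ Cc * 3^l := le_trans hCc.symm.le h4
        omega
    have haA : a ∈ Aphi := by
      rcases hacase with haa | ⟨l, rfl⟩
      · exact haa.1
      · exfalso
        have h4 : Cc ≤ Cc * 3^l := by
          calc Cc = Cc * 1 := by ring
            _ ≤ Cc * 3^l := mul_le_mul_of_nonneg_left (hpow3 l) hCcpos.le
        have h6 := hbA.2
        have h5 : 2*M^D+1 ≤ Cc * 3^l := le_trans hCc.symm.le h4
        omega
    exact ⟨haA, hbA.1, hcA.1⟩

  -- ## X is k-AP free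
  have hAPFree : APFree k (↑X : Set ℤ) := by
    have claim : ∀ x d : ℤ, 0 < d → ¬ ((↑(AP k x d) : Set ℤ) ⊆ ↑X) := by
      intro x d hd hsub
      have hmemX : ∀ i : ℕ, i < k → x + (i:ℤ)*d ∈ X := by
        intro i hi
        have h1 : (x + (i:ℤ)*d) ∈ AP k x d := mem_AP.2 ⟨i, hi, rfl⟩
        exact Finset.mem_coe.1 (hsub (Finset.mem_coe.2 h1))
      have hall : ∀ i : ℕ, i ≤ s → x + (i:ℤ)*d ∈ Aphi := by
        intro i hi
        have hj : ∃ j : ℕ, j + 2 ≤ k - 1 ∧ (i = j ∨ i = j+1 ∨ i = j+2) := by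
          rcases Nat.lt_or_ge i (k-2) with hi2 | hi2
          · rcases Nat.eq_zero_or_pos i with rfl | hi3
            · exact ⟨0, by omega, Or.inl rfl⟩
            · exact ⟨i-1, by omega, Or.inr (Or.inl (by omega))⟩
          · exact ⟨k-3, by omega, by omega⟩
        obtain ⟨j, hj2, hcase⟩ := hj
        have t0 := hmemX j (by omega)
        have t1 := hmemX (j+1) (by omega)
        have t2 := hmemX (j+2) (by omega)
        have l01 : x + (j:ℤ)*d < x + ((j+1:ℕ):ℤ)*d := by
          push_cast; linarith only [hd]
        have l12 : x + ((j+1:ℕ):ℤ)*d < x + ((j+2:ℕ):ℤ)*d := by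
          push_cast; linarith only [hd]
        have lsum3 : (x + (j:ℤ)*d) + (x + ((j+2:ℕ):ℤ)*d) = 2*(x + ((j+1:ℕ):ℤ)*d) := by
          push_cast; ring
        have trip := h3AP _ _ _ t0 t1 t2 l01 l12 lsum3
        rcases hcase with rfl | rfl | rfl
        · exact trip.1
        · exact trip.2.1
        · exact trip.2.2
      have hT : ∀ i : ℕ, i ≤ s → ∃ t, t ∈ A' ∧ phi M t = x + (i:ℤ)*d := by
        intro i hi
        have h2 := hall i hi
        rw [hAphi, Finset.mem_image] at h2
        obtain ⟨t, ht, hphit⟩ := h2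
        exact ⟨t, ht, hphit⟩
      choose T hTA hTphi using hT
      set u : Fin D → ℤ := T 0 (Nat.zero_le s) with hu
      set e : Fin D → ℤ := fun a => T 1 hs1 a - u a with he
      have hphiu : phi M u = x := by
        have h1 := hTphi 0 (Nat.zero_le s)
        rw [← hu] at h1
        simpa using h1
      have hphie : phi M e = d := by
        have h1 := hTphi 1 hs1
        have hfun : (fun a => u a + (1:ℤ) * e a) = T 1 hs1 := by
          funext a; rw [he]; ring
        have hsplit := phi_add_smul u e 1 M
        rw [hfun, h1, hphiu] at hsplit
        push_cast at hsplit
        linarith only [hsplit]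
      have hene : e ≠ 0 := by
        intro h0
        rw [h0] at hphie
        have h1 : phi M (0 : Fin D → ℤ) = 0 := by simp [phi]
        omega
      have hTbound := fun (i:ℕ) (hi : i ≤ s) => hA'bound _ (hTA i hi)
      have hebound : ∀ a, -Lz ≤ e a ∧ e a ≤ Lz := by
        intro a
        have c1 := hTbound 1 hs1 a
        have c2 := hTbound 0 (Nat.zero_le s) a
        rw [he]
        constructor
        · show -Lz ≤ T 1 hs1 a - u a
          rw [hu]; omega
        · show T 1 hs1 a - u a ≤ Lz
          rw [hu]; omega
      have hstep : ∀ i : ℕ, (hi : i ≤ s) → T i hi = fun a => u a + (i:ℤ) * e a := by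
        intro i
        induction i with
        | zero =>
          intro hi
          funext a
          show T 0 hi a = u a + ((0:ℕ):ℤ) * e a
          have : T 0 hi = u := rfl
          rw [this]
          push_cast
          ring
        | succ i ih =>
          intro hi
          have hi' : i ≤ s := by omega
          have hdiff : (fun a => T (i+1) hi a - T i hi' a - e a) = 0 := by
            apply digits_eq_zero (M := M)
            · intro a
              have b1 := hTbound (i+1) hi a
              have b2 := hTbound i hi' a
              have b3 := hebound a
              show |T (i+1) hi a - T i hi' a - e a| < M
              rw [abs_lt]
              omega
            · have hphidiff : phi M (fun a => T (i+1) hi a - T i hi' a - e a)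
                  = phi M (T (i+1) hi) - phi M (T i hi') - phi M e := by
                simp only [phi, sub_mul, Finset.sum_sub_distrib]
              rw [hphidiff, hTphi (i+1) hi, hTphi i hi', hphie]
              push_cast
              ring
          funext a
          have h5 : T (i+1) hi a - T i hi' a - e a = 0 := by
            simpa using congrFun hdiff a
          have h6 : T i hi' a = u a + (i:ℤ)*e a := by
            have := congrFun (ih hi') a
            simpa using this
          show T (i+1) hi a = u a + ((i+1:ℕ):ℤ) * e a
          push_cast
          push_cast at h6
          linarith only [h5, h6]
      exact no_long_AP (show 2 ≤ s by omega) h r h' r' c hh' A' hA'stat u e hene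
        (fun j hj => by
          have := hTA j hj
          rw [hstep j hj] at this
          exact this)
    intro x d hd
    rcases lt_trichotomy d 0 with hneg | hzero | hpos
    · rw [AP_reverse k x d (by omega)]
      exact claim _ _ (by omega)
    · exact absurd hzero hd
    · exact claim _ _ hpos
  -- ## counting
  have powinj : ∀ (A : Finset ℤ), Function.Injective
      (fun P : {P : Finset ℤ // P ⊆ A ∧ ∃ x d : ℤ, d ≠ 0 ∧ P = AP s x d} =>
        (⟨P.1, Finset.mem_powerset.2 P.2.1⟩ : {Q // Q ∈ A.powerset})) := by
    intro A P Q hPQ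
    have h1 : P.1 = Q.1 := congrArg (fun z : {Q // Q ∈ A.powerset} => z.1) hPQ
    exact Subtype.ext h1
  have hfinsub : ∀ (A : Finset ℤ),
      Finite {P : Finset ℤ // P ⊆ A ∧ ∃ x d : ℤ, d ≠ 0 ∧ P = AP s x d} := by
    intro A
    exact Finite.of_injective _ (powinj A)
  have hcount : G.card ≤ fAP s X := by
    haveI := hfinsub X
    have hdpos : ∀ p, p ∈ G → 0 < phi M p.2 := by
      intro p hp
      obtain ⟨-, hb, hne, -⟩ := hGmem p hp
      exact phi_pos hMpos (fun a => (mem_boxW.1 hb a).1) hne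
    have hsubX : ∀ p, p ∈ G → AP s (phi M p.1) (phi M p.2) ⊆ X := by
      intro p hp z hz
      obtain ⟨i, hi, rfl⟩ := mem_AP.1 hz
      have hmem' : (fun a => p.1 a + (i:ℤ) * p.2 a) ∈ A' := hA'in p i hp hi
      have heq : phi M (fun a => p.1 a + (i:ℤ) * p.2 a) = phi M p.1 + (i:ℤ) * phi M p.2 :=
        phi_add_smul _ _ _ _
      rw [hX, Finset.mem_union]
      left
      rw [hAphi, Finset.mem_image]
      exact ⟨_, hmem', heq⟩
    set J : {p // p ∈ G} → {P : Finset ℤ // P ⊆ X ∧ ∃ x d : ℤ, d ≠ 0 ∧ P = AP s x d} :=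
      fun p => ⟨AP s (phi M p.1.1) (phi M p.1.2),
        hsubX p.1 p.2, phi M p.1.1, phi M p.1.2, (hdpos p.1 p.2).ne', rfl⟩ with hJ
    have hJinj : Function.Injective J := by
      intro p q hpq
      have heq : AP s (phi M p.1.1) (phi M p.1.2) = AP s (phi M q.1.1) (phi M q.1.2) := by
        have h1 := congrArg Subtype.val hpq
        simpa [hJ] using h1
      obtain ⟨e1, e2⟩ := AP_inj (by omega) (hdpos p.1 p.2) (hdpos q.1 q.2) heq
      obtain ⟨hb1, hb2, -, -⟩ := hGmem p.1 p.2
      obtain ⟨hc1, hc2, -, -⟩ := hGmem q.1 q.2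
      have hmLz : (m:ℤ) - 1 ≤ Lz := by
        rw [hLz]
        have hs1' : (1:ℤ) ≤ (s:ℤ) := by exact_mod_cast hs1
        have hm' : (0:ℤ) ≤ (m:ℤ) := Int.ofNat_nonneg m
        have h1 : (1:ℤ)*(m:ℤ) ≤ (s:ℤ)*(m:ℤ) := mul_le_mul_of_nonneg_right hs1' hm'
        linarith only [h1]
      have v1 : p.1.1 = q.1.1 := phi_inj (L := Lz) (by omega)
        (fun a => ⟨(mem_boxW.1 hb1 a).1, le_trans (mem_boxW.1 hb1 a).2 hmLz⟩)
        (fun a => ⟨(mem_boxW.1 hc1 a).1, le_trans (mem_boxW.1 hc1 a).2 hmLz⟩) e1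
      have v2 : p.1.2 = q.1.2 := phi_inj (L := Lz) (by omega)
        (fun a => ⟨(mem_boxW.1 hb2 a).1, le_trans (mem_boxW.1 hb2 a).2 hmLz⟩)
        (fun a => ⟨(mem_boxW.1 hc2 a).1, le_trans (mem_boxW.1 hc2 a).2 hmLz⟩) e2
      exact Subtype.ext (Prod.ext v1 v2)
    calc G.card = Nat.card {p // p ∈ G} := by
          rw [Nat.card_eq_fintype_card, Fintype.card_coe]
      _ ≤ Nat.card {P : Finset ℤ // P ⊆ X ∧ ∃ x d : ℤ, d ≠ 0 ∧ P = AP s x d} :=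
          Nat.card_le_card_of_injective J hJinj
      _ = fAP s X := rfl
  have hbdd : BddAbove {m0 | ∃ A : Finset ℤ, A.card = n ∧ APFree k ↑A ∧ fAP s A = m0} := by
    refine ⟨2^n, ?_⟩
    rintro m0 ⟨A, hcard, -, rfl⟩
    haveI := hfinsub A
    show fAP s A ≤ 2^n
    calc fAP s A ≤ Nat.card {Q // Q ∈ A.powerset} :=
          Nat.card_le_card_of_injective _ (powinj A)
      _ = 2^n := by
          rw [Nat.card_eq_fintype_card, Fintype.card_coe, Finset.card_powerset, hcard]
  have hmem0 : fAP s X ∈ {m0 | ∃ A : Finset ℤ, A.card = n ∧ APFree k ↑A ∧ fAP s A = m0} :=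
    ⟨X, hXcard, hAPFree, rfl⟩
  calc g ≤ G.card := hGcard
    _ ≤ fAP s X := hcount
    _ ≤ fsk s k n := le_csSup hbdd hmem0



lemma nat_div_real (a b : ℕ) (hb : 0 < b) : ((a:ℝ) - b)/b ≤ ((a / b : ℕ) : ℝ) := by
  have h1 : b * (a / b) + a % b = a := Nat.div_add_mod a b
  have h2 : a % b < b := Nat.mod_lt a hb
  have h3 : (a:ℝ) ≤ (b:ℝ) * ((a/b : ℕ):ℝ) + b := by
    have : (a:ℝ) = (b:ℝ) * ((a/b : ℕ):ℝ) + ((a % b : ℕ):ℝ) := by exact_mod_cast h1.symm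
    rw [this]
    have : ((a % b : ℕ):ℝ) ≤ (b:ℝ) := by exact_mod_cast h2.le
    linarith only [this]
  have hb' : (0:ℝ) < (b:ℝ) := by exact_mod_cast hb
  rw [div_le_iff₀ hb']
  linarith only [h3]

set_option maxHeartbeats 2000000 in
lemma analysis (s m D n : ℕ) (ε' : ℝ) (hs : 3 ≤ s) (hm : 2 ≤ m) (hD : 1 ≤ D)
    (hε0 : 0 < ε') (hε1 : ε' ≤ 1)
    (hmε : 2*(s:ℝ)^2 ≤ (m:ℝ) ^ ε')
    (hE : 4*((D:ℝ)*(m:ℝ)^2+1)^5 * (s:ℝ)^2 * (m:ℝ)^2 ≤ 2^D)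
    (hn2 : n < (s*m)^(D+1)) :
    (n:ℝ) ^ ((2:ℝ) - ε') ≤ (((m^D * (m^D - 1)) / ((D*m^2+1)^5) : ℕ) : ℝ) := by
  set b : ℕ := (D*m^2+1)^5 with hbdef
  set a : ℕ := m^D * (m^D - 1) with hadef
  have hbpos : 0 < b := by positivity
  have hbr : (b:ℝ) = ((D:ℝ)*(m:ℝ)^2+1)^5 := by rw [hbdef]; push_cast; ring
  have hbrpos : (0:ℝ) < (b:ℝ) := by exact_mod_cast hbpos
  have hsr : (3:ℝ) ≤ (s:ℝ) := by exact_mod_cast hs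
  have hmr : (2:ℝ) ≤ (m:ℝ) := by exact_mod_cast hm
  have hDr : (1:ℝ) ≤ (D:ℝ) := by exact_mod_cast hD
  -- basic powers
  have h2m : (2:ℝ)^D ≤ (m:ℝ)^D := pow_le_pow_left₀ (by norm_num) hmr D
  have h2D : (2:ℝ) ≤ (2:ℝ)^D := by
    calc (2:ℝ) = 2^1 := by norm_num
      _ ≤ 2^D := pow_le_pow_right₀ (by norm_num) hD
  have hsm1 : (1:ℝ) ≤ (s:ℝ)*(m:ℝ) := by nlinarith
  -- a is large : (a:ℝ) ≥ m^(2D)/2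
  have haR : (m:ℝ)^D * ((m:ℝ)^D - 1) ≤ (a:ℝ) := by
    rw [hadef]
    have h1 : 1 ≤ m^D := Nat.one_le_pow _ _ (by omega)
    push_cast [h1]
    ring_nf
    exact le_refl _
  have ha2 : (m:ℝ)^D * (m:ℝ)^D / 2 ≤ (a:ℝ) := by
    have h1 : (2:ℝ) ≤ (m:ℝ)^D := le_trans h2D h2m
    nlinarith [haR]
  -- step 1 : n ^ (2-ε') ≤ ((sm)^(D+1))^(2-ε')
  set X : ℝ := ((s:ℝ)*(m:ℝ))^(D+1) with hX
  have hX1 : (1:ℝ) ≤ X := by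
    rw [hX]
    calc (1:ℝ) = 1^(D+1) := by norm_num
      _ ≤ ((s:ℝ)*(m:ℝ))^(D+1) := pow_le_pow_left₀ (by norm_num) hsm1 _
  have hXpos : (0:ℝ) < X := lt_of_lt_of_le one_pos hX1
  have hstep1 : (n:ℝ) ^ ((2:ℝ) - ε') ≤ X ^ ((2:ℝ) - ε') := by
    apply Real.rpow_le_rpow (Nat.cast_nonneg n) _ (by linarith)
    rw [hX]
    have := hn2.le
    push_cast at this ⊢
    exact_mod_cast this
  -- step 2 : X^(2-ε') = X^2 / X^ε'
  have hstep2 : X ^ ((2:ℝ) - ε') = X^2 / X ^ ε' := by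
    rw [Real.rpow_sub hXpos]
    norm_num [Real.rpow_two]
  -- step 3 : X^ε' ≥ (2 s^2)^D
  have hstep3 : (2*(s:ℝ)^2)^D ≤ X ^ ε' := by
    have h1 : ((m:ℝ)^D : ℝ) ≤ X := by
      rw [hX]
      calc (m:ℝ)^D ≤ (m:ℝ)^(D+1) := pow_le_pow_right₀ (by linarith) (by omega)
        _ ≤ ((s:ℝ)*(m:ℝ))^(D+1) := by
            apply pow_le_pow_left₀ (by linarith)
            nlinarith
    have h2 : ((m:ℝ)^D) ^ ε' ≤ X ^ ε' :=
      Real.rpow_le_rpow (by positivity) h1 hε0.le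
    refine le_trans ?_ h2
    have h3 : ((m:ℝ)^D) ^ ε' = ((m:ℝ) ^ ε')^D := by
      rw [← Real.rpow_natCast (m:ℝ) D, ← Real.rpow_mul (by linarith),
        mul_comm, Real.rpow_mul (by linarith), Real.rpow_natCast]
    rw [h3]
    exact pow_le_pow_left₀ (by positivity) hmε D
  -- step 4 : X^2 = s^2 m^2 * (s^2)^D * m^(2D) ... combine
  have hX2 : X^2 = (s:ℝ)^2*(m:ℝ)^2 * ((s:ℝ)^2)^D * ((m:ℝ)^D)^2 := by
    rw [hX]; ring
  have hfinal : X ^ ((2:ℝ) - ε') ≤ (s:ℝ)^2*(m:ℝ)^2 * ((m:ℝ)^D)^2 / 2^D := by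
    rw [hstep2]
    rw [div_le_div_iff₀ (by positivity) (by positivity)]
    calc X^2 * 2^D = ((s:ℝ)^2*(m:ℝ)^2 * ((m:ℝ)^D)^2) * ((2:ℝ)^D * ((s:ℝ)^2)^D) := by
          rw [hX2]; ring
      _ = ((s:ℝ)^2*(m:ℝ)^2 * ((m:ℝ)^D)^2) * (2*(s:ℝ)^2)^D := by
          rw [mul_pow]
      _ ≤ ((s:ℝ)^2*(m:ℝ)^2 * ((m:ℝ)^D)^2) * X ^ ε' := by
          apply mul_le_mul_of_nonneg_left hstep3 (by positivity)
  -- step 5 : b * RHS + b ≤ a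
  have hb1 : (b:ℝ) * ((s:ℝ)^2*(m:ℝ)^2 * ((m:ℝ)^D)^2 / 2^D) ≤ ((m:ℝ)^D)^2/4 := by
    have hrw : (b:ℝ) * ((s:ℝ)^2*(m:ℝ)^2 * ((m:ℝ)^D)^2 / 2^D)
        = ((b:ℝ) * ((s:ℝ)^2*(m:ℝ)^2 * ((m:ℝ)^D)^2)) / 2^D := by ring
    rw [hrw, div_le_div_iff₀ (by positivity) (by norm_num)]
    calc (b:ℝ) * ((s:ℝ)^2*(m:ℝ)^2 * ((m:ℝ)^D)^2) * 4
        = (4 * (b:ℝ) * (s:ℝ)^2 * (m:ℝ)^2) * ((m:ℝ)^D)^2 := by ring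
      _ ≤ 2^D * ((m:ℝ)^D)^2 := by
          apply mul_le_mul_of_nonneg_right _ (by positivity)
          rw [hbr]; linarith only [hE]
      _ = ((m:ℝ)^D)^2 * 2^D := by ring
  have hb2 : (b:ℝ) ≤ ((m:ℝ)^D)^2/4 := by
    have h1 : 4*(b:ℝ) ≤ 2^D := by
      rw [hbr]
      have hq : (1:ℝ) ≤ (s:ℝ)^2*(m:ℝ)^2 := by nlinarith [hsr, hmr]
      have hp : (0:ℝ) ≤ 4*((D:ℝ)*(m:ℝ)^2+1)^5 := by positivity
      calc 4*((D:ℝ)*(m:ℝ)^2+1)^5 = 4*((D:ℝ)*(m:ℝ)^2+1)^5 * 1 := by ring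
        _ ≤ 4*((D:ℝ)*(m:ℝ)^2+1)^5 * ((s:ℝ)^2*(m:ℝ)^2) :=
            mul_le_mul_of_nonneg_left hq hp
        _ = 4*((D:ℝ)*(m:ℝ)^2+1)^5 * (s:ℝ)^2*(m:ℝ)^2 := by ring
        _ ≤ 2^D := hE
    have h2 : (2:ℝ)^D ≤ ((m:ℝ)^D)^2 := by
      calc (2:ℝ)^D ≤ (m:ℝ)^D := h2m
        _ ≤ ((m:ℝ)^D)^2 := by nlinarith [h2D, h2m]
    linarith only [h1, h2]
  -- conclude
  have hfin2 : (n:ℝ) ^ ((2:ℝ) - ε') ≤ ((a:ℝ) - b)/b := by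
    rw [le_div_iff₀ hbrpos]
    have h1 : (n:ℝ) ^ ((2:ℝ) - ε') ≤ (s:ℝ)^2*(m:ℝ)^2 * ((m:ℝ)^D)^2 / 2^D :=
      le_trans hstep1 hfinal
    have h2 : (n:ℝ) ^ ((2:ℝ) - ε') * b ≤ ((m:ℝ)^D)^2/4 := by
      calc (n:ℝ) ^ ((2:ℝ) - ε') * b ≤ ((s:ℝ)^2*(m:ℝ)^2 * ((m:ℝ)^D)^2 / 2^D) * b := by
            apply mul_le_mul_of_nonneg_right h1 hbrpos.le
        _ = (b:ℝ) * ((s:ℝ)^2*(m:ℝ)^2 * ((m:ℝ)^D)^2 / 2^D) := by ring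
        _ ≤ ((m:ℝ)^D)^2/4 := hb1
    have h3 : ((m:ℝ)^D)^2/4 + (b:ℝ) ≤ ((m:ℝ)^D)^2/2 := by linarith only [hb2]
    have h4 : ((m:ℝ)^D)^2/2 ≤ (a:ℝ) := by
      have : ((m:ℝ)^D)^2 = (m:ℝ)^D * (m:ℝ)^D := by ring
      linarith only [ha2, this.le]
    linarith only [h2, h3, h4]
  exact le_trans hfin2 (nat_div_real a b hbpos)

lemma eventually_exp (s m : ℕ) (hs : 3 ≤ s) (hm : 2 ≤ m) :
    ∃ D₀ : ℕ, ∀ D : ℕ, D₀ ≤ D →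
      4*((D:ℝ)*(m:ℝ)^2+1)^5 * (s:ℝ)^2 * (m:ℝ)^2 ≤ 2^D := by
  set K : ℝ := 4 * (2*(m:ℝ)^2)^5 * (s:ℝ)^2 * (m:ℝ)^2 with hK
  have hKpos : 0 < K := by
    rw [hK]
    have h1 : (0:ℝ) < (m:ℝ) := by
      have : (2:ℝ) ≤ (m:ℝ) := by exact_mod_cast hm
      linarith
    have h2 : (0:ℝ) < (s:ℝ) := by
      have : (3:ℝ) ≤ (s:ℝ) := by exact_mod_cast hs
      linarith
    positivity
  have h1 := tendsto_pow_const_div_const_pow_of_one_lt 5 (by norm_num : (1:ℝ) < 2)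
  have h2 : ∀ᶠ D : ℕ in atTop, (D:ℝ)^5/2^D < 1/K :=
    h1.eventually (gt_mem_nhds (by positivity))
  have h3 : ∀ᶠ D : ℕ in atTop, 1 ≤ D := eventually_ge_atTop 1
  obtain ⟨D₀, hD₀⟩ := eventually_atTop.1 (h2.and h3)
  refine ⟨D₀, fun D hD => ?_⟩
  obtain ⟨hlt, hD1⟩ := hD₀ D hD
  have hDr : (1:ℝ) ≤ (D:ℝ) := by exact_mod_cast hD1
  have hmr : (2:ℝ) ≤ (m:ℝ) := by exact_mod_cast hm
  have hstep : ((D:ℝ)*(m:ℝ)^2+1) ≤ 2*(m:ℝ)^2*(D:ℝ) := by nlinarith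
  have hstep5 : ((D:ℝ)*(m:ℝ)^2+1)^5 ≤ (2*(m:ℝ)^2)^5*(D:ℝ)^5 := by
    calc ((D:ℝ)*(m:ℝ)^2+1)^5 ≤ (2*(m:ℝ)^2*(D:ℝ))^5 :=
          pow_le_pow_left₀ (by positivity) hstep 5
      _ = (2*(m:ℝ)^2)^5*(D:ℝ)^5 := by ring
  have hKD : K * (D:ℝ)^5 < 2^D := by
    have h4 := (div_lt_div_iff₀ (by positivity : (0:ℝ) < 2^D) hKpos).1 hlt
    linarith only [h4]
  have hs0 : (0:ℝ) ≤ (s:ℝ)^2 := by positivity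
  have hm0 : (0:ℝ) ≤ (m:ℝ)^2 := by positivity
  calc 4*((D:ℝ)*(m:ℝ)^2+1)^5 * (s:ℝ)^2 * (m:ℝ)^2
      ≤ 4*((2*(m:ℝ)^2)^5*(D:ℝ)^5) * (s:ℝ)^2 * (m:ℝ)^2 := by gcongr
    _ = K * (D:ℝ)^5 := by rw [hK]; ring
    _ ≤ 2^D := hKD.le

theorem main (k s : ℕ) (hs : 3 ≤ s) (hk : s < k) (ε : ℝ) (hε : 0 < ε) :
    ∃ n₀ : ℕ, ∀ n : ℕ, n₀ ≤ n → (n:ℝ) ^ ((2:ℝ) - ε) ≤ (fsk s k n : ℝ) := by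
  set ε' := min ε 1 with hε'def
  have hε'0 : 0 < ε' := lt_min hε one_pos
  have hε'1 : ε' ≤ 1 := min_le_right _ _
  have hε'ε : ε' ≤ ε := min_le_left _ _
  set m : ℕ := max 2 ⌈(2*(s:ℝ)^2) ^ ((1:ℝ)/ε')⌉₊ with hmdef
  have hm2 : 2 ≤ m := le_max_left _ _
  have hbase : (0:ℝ) < 2*(s:ℝ)^2 := by
    have : (3:ℝ) ≤ (s:ℝ) := by exact_mod_cast hs
    positivity
  have hmε : 2*(s:ℝ)^2 ≤ (m:ℝ) ^ ε' := by
    have h1 : ((2*(s:ℝ)^2) ^ ((1:ℝ)/ε') : ℝ) ≤ (m:ℝ) := by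
      calc (2*(s:ℝ)^2) ^ ((1:ℝ)/ε') ≤ (⌈(2*(s:ℝ)^2) ^ ((1:ℝ)/ε')⌉₊ : ℝ) := Nat.le_ceil _
        _ ≤ (m:ℝ) := Nat.cast_le.2 (le_max_right 2 ⌈(2*(s:ℝ)^2) ^ ((1:ℝ)/ε')⌉₊)
    have h2 : (((2*(s:ℝ)^2) ^ ((1:ℝ)/ε')) ^ ε' : ℝ) ≤ (m:ℝ) ^ ε' :=
      Real.rpow_le_rpow (by positivity) h1 hε'0.le
    have h3 : (((2*(s:ℝ)^2) ^ ((1:ℝ)/ε')) ^ ε' : ℝ) = 2*(s:ℝ)^2 := by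
      rw [← Real.rpow_mul hbase.le, one_div_mul_cancel hε'0.ne', Real.rpow_one]
    rwa [h3] at h2
  obtain ⟨D₀', hD₀⟩ := eventually_exp s m hs hm2
  set D₀ := max D₀' 1 with hD₀def
  refine ⟨(s*m)^(D₀+1), fun n hn => ?_⟩
  have h6 : 6 ≤ s*m := by
    calc 6 = 3*2 := by norm_num
      _ ≤ s*m := Nat.mul_le_mul hs hm2
  have hn0 : n ≠ 0 := by
    have h1 : 0 < (s*m)^(D₀+1) := Nat.pow_pos (by omega)
    omega
  set D := Nat.log (s*m) n with hDdef
  have hD1 : (s*m)^D ≤ n := Nat.pow_log_le_self _ hn0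
  have hD2 : n < (s*m)^(D+1) := Nat.lt_pow_succ_log_self (by omega : 1 < s*m) n
  have hDge : D₀+1 ≤ D := by
    rw [hDdef]
    exact (Nat.le_log_iff_pow_le (by omega) hn0).2 hn
  have hD₀1 : 1 ≤ D₀ := le_max_right _ _
  have hD₀' : D₀' ≤ D₀ := le_max_left _ _
  set g := (m^D * (m^D - 1)) / ((D*m^2+1)^5) with hgdef
  have hgle : (D*m^2+1)^5 * g ≤ m^D*(m^D-1) := by
    rw [hgdef, mul_comm]
    exact Nat.div_mul_le_self _ _
  have hcon := construction s k m D n g hs hk hm2 hD1 hgle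
  have hana := analysis s m D n ε' hs hm2 (by omega) hε'0 hε'1 hmε
    (hD₀ D (by omega)) hD2
  calc (n:ℝ) ^ ((2:ℝ)-ε) ≤ (n:ℝ) ^ ((2:ℝ)-ε') := by
        apply Real.rpow_le_rpow_of_exponent_le _ (by linarith only [hε'ε])
        have h1 : 1 ≤ n := by omega
        exact_mod_cast h1
    _ ≤ (g:ℝ) := hana
    _ ≤ (fsk s k n : ℝ) := by exact_mod_cast hcon


end FSKAux

theorem fsk_lower_n_two_minus_eps (k s : ℕ) (hs : 3 ≤ s) (hk : s < k)
    (ε : ℝ) (hε : 0 < ε) :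
    ∃ n₀ : ℕ, ∀ n : ℕ, n₀ ≤ n → (n : ℝ) ^ ((2 : ℝ) - ε) ≤ (fsk s k n : ℝ) :=
  FSKAux.main k s hs hk ε hε
end
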